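/- Let S ≥ 1, D > 0, n ≥ 96, ρ ∈ (0,1). Let p̂ ∈ Δ^S be the average of n i.i.d. multinoulli trials with parameter p ∈ Δ^S. Then for any fixed h ∈ [0,D]^S, with probability at least 1 − ρ, |(p̂ − p)ᵀh| ≤ 2·√( log(n/ρ)·Σ_{i=1}^{S−1} γ_i·c_i²/n ) + 3·D·log(n/ρ)/n, where γ_i := p_i·(p_{i+1}+⋯+p_S)/(p_i+⋯+p_S), c_i := h_i − H_{i+1}, and H_{i+1} := (Σ_{j=i+1}^S h_j·p_j)/(Σ_{j=i+1}^S p_j). -/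

import Mathlib

open MeasureTheory ProbabilityTheory Finset

set_option maxHeartbeats 1000000

noncomputable section

/-- Law of a `Dirichlet(α)` random vector: the law of `(X i / ∑ j, X j) i` where the `X i`
are independent with `X i ~ Gamma (α i) 1`. -/
def dirichletLaw {S : ℕ} (α : Fin S → ℝ) : Measure (Fin S → ℝ) :=
  (Measure.pi fun i => gammaMeasure (α i) 1).map (fun x i => x i / ∑ j, x j)

/-- The categorical (multinoulli) measure on `Fin S` with parameter `p`. -/
def catMeasure {S : ℕ} (p : Fin S → ℝ) : Measure (Fin S) :=
  ∑ i : Fin S, ENNReal.ofReal (p i) • Measure.dirac i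

/-- Joint law of `n` i.i.d. multinoulli trials with parameter `p`. -/
def trialsLaw {S : ℕ} (p : Fin S → ℝ) (n : ℕ) : Measure (Fin n → Fin S) :=
  Measure.pi fun _ : Fin n => catMeasure p

/-- The empirical distribution (the average `p̂` of the `n` multinoulli trials `x`). -/
def empDist {S n : ℕ} (x : Fin n → Fin S) (i : Fin S) : ℝ :=
  ((Finset.univ.filter fun j => x j = i).card : ℝ) / (n : ℝ)

variable {S : ℕ} {p : Fin S → ℝ}

lemma cat_prob (hp : p ∈ stdSimplex ℝ (Fin S)) : IsProbabilityMeasure (catMeasure p) := by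
  constructor
  rw [catMeasure]
  simp only [Measure.coe_finset_sum, Finset.sum_apply, Measure.smul_apply,
    Measure.dirac_apply_of_mem (Set.mem_univ _), smul_eq_mul, mul_one]
  rw [← ENNReal.ofReal_sum_of_nonneg (fun i _ => hp.1 i), hp.2]
  simp

lemma cat_integral (hp : p ∈ stdSimplex ℝ (Fin S)) (f : Fin S → ℝ) :
    ∫ i, f i ∂(catMeasure p) = ∑ i, p i * f i := by
  rw [catMeasure, integral_finset_sum_measure]
  · refine Finset.sum_congr rfl fun i _ => ?_
    rw [integral_smul_measure, integral_dirac, ENNReal.toReal_ofReal (hp.1 i), smul_eq_mul]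
  · intro i _
    exact Integrable.smul_measure (Integrable.of_finite) (by simp)

lemma trials_prob (n : ℕ) (hp : p ∈ stdSimplex ℝ (Fin S)) :
    IsProbabilityMeasure (trialsLaw p n) := by
  have := cat_prob hp
  rw [trialsLaw]
  infer_instance

lemma trials_integral_prod (n : ℕ) (hp : p ∈ stdSimplex ℝ (Fin S)) (f : Fin S → ℝ) :
    ∫ x : Fin n → Fin S, ∏ j, f (x j) ∂(trialsLaw p n) = (∫ i, f i ∂(catMeasure p)) ^ n := by
  have := cat_prob hp
  letI : MeasureSpace (Fin S) := ⟨catMeasure p⟩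
  have : trialsLaw p n = (volume : Measure (Fin n → Fin S)) := rfl
  rw [this]
  have := integral_fintype_prod_volume_eq_pow (𝕜 := ℝ) (ι := Fin n) f
  rw [Fintype.card_fin] at this
  exact this

example : MeasurableSingletonClass (Fin 3 → Fin 2) := inferInstance

lemma chernoff (n : ℕ) (hp : p ∈ stdSimplex ℝ (Fin S)) (f : Fin S → ℝ) (l t : ℝ) (hl : 0 ≤ l) :
    trialsLaw p n {x | (n : ℝ) * t ≤ ∑ j, f (x j)} ≤
      ENNReal.ofReal (Real.exp (-(l * n * t)) * (∫ i, Real.exp (l * f i) ∂(catMeasure p)) ^ n) := by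
  have hprob := trials_prob (p := p) n hp
  set μ := trialsLaw p n
  set g : (Fin n → Fin S) → ℝ := fun x => ∏ j, Real.exp (l * f (x j)) with hg
  have hgpos : ∀ x, 0 < g x := fun x => Finset.prod_pos fun j _ => Real.exp_pos _
  have hsub : {x : Fin n → Fin S | (n : ℝ) * t ≤ ∑ j, f (x j)} ⊆
      {x | Real.exp (l * n * t) ≤ g x} := by
    intro x hx
    have : Real.exp (l * ((n : ℝ) * t)) ≤ Real.exp (l * ∑ j, f (x j)) :=
      Real.exp_le_exp.2 (mul_le_mul_of_nonneg_left hx hl)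
    calc Real.exp (l * n * t) = Real.exp (l * ((n:ℝ) * t)) := by ring_nf
    _ ≤ Real.exp (l * ∑ j, f (x j)) := this
    _ = g x := by rw [hg]; simp only [Finset.mul_sum, Real.exp_sum]
  have hint : Integrable g μ := Integrable.of_finite
  have hmar := mul_meas_ge_le_integral_of_nonneg
    (Filter.Eventually.of_forall fun x => (hgpos x).le) hint (Real.exp (l * n * t))
  have hEg : ∫ x, g x ∂μ = (∫ i, Real.exp (l * f i) ∂(catMeasure p)) ^ n :=
    trials_integral_prod n hp (fun i => Real.exp (l * f i))
  have h1 : μ {x | Real.exp (l * n * t) ≤ g x} ≤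
      ENNReal.ofReal (Real.exp (-(l * n * t)) * (∫ i, Real.exp (l * f i) ∂(catMeasure p)) ^ n) := by
    have hne : μ {x | Real.exp (l * n * t) ≤ g x} ≠ ⊤ := measure_ne_top _ _
    rw [← ENNReal.ofReal_toReal hne]
    apply ENNReal.ofReal_le_ofReal
    rw [← hEg]
    rw [Real.exp_neg]
    rw [inv_mul_eq_div, le_div_iff₀ (Real.exp_pos _), mul_comm]
    exact hmar
  exact le_trans (measure_mono hsub) h1

lemma exp_quad {x : ℝ} (hx : |x| ≤ 1) : Real.exp x ≤ 1 + x + (13/18) * x^2 := by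
  have h := Real.exp_bound hx (by norm_num : 0 < 3)
  have h1 := (abs_sub_le_iff.1 h).1
  simp [Finset.sum_range_succ, Nat.factorial] at h1 h
  have hx2 : |x|^3 ≤ x^2 := by
    have : |x|^3 ≤ |x|^2 := pow_le_pow_of_le_one (abs_nonneg x) hx (by norm_num)
    simpa [sq_abs] using this
  nlinarith [sq_abs x, abs_nonneg x]

lemma mgf_bound (hp : p ∈ stdSimplex ℝ (Fin S)) (f : Fin S → ℝ) {D l : ℝ} (hD : 0 < D)
    (hb : ∀ i, |f i| ≤ D) (hcent : ∑ i, p i * f i = 0)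
    (hl0 : 0 ≤ l) (hl1 : l * D ≤ 1) :
    ∫ i, Real.exp (l * f i) ∂(catMeasure p) ≤
      Real.exp ((13/18) * l^2 * (∑ i, p i * (f i)^2)) := by
  rw [cat_integral hp]
  have key : ∀ i, p i * Real.exp (l * f i) ≤ p i * (1 + l * f i + (13/18) * (l * f i)^2) := by
    intro i
    refine mul_le_mul_of_nonneg_left ?_ (hp.1 i)
    apply exp_quad
    rw [abs_mul, abs_of_nonneg hl0]
    calc l * |f i| ≤ l * D := mul_le_mul_of_nonneg_left (hb i) hl0
    _ ≤ 1 := hl1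
  calc ∑ i, p i * Real.exp (l * f i) ≤ ∑ i, p i * (1 + l * f i + (13/18) * (l * f i)^2) :=
        Finset.sum_le_sum fun i _ => key i
  _ = 1 + (13/18) * l^2 * (∑ i, p i * (f i)^2) := by
      have e1 : ∀ i : Fin S, p i * (1 + l * f i + (13/18) * (l * f i)^2)
          = p i + l * (p i * f i) + (13/18) * l^2 * (p i * (f i)^2) := fun i => by ring
      simp only [e1, Finset.sum_add_distrib, ← Finset.mul_sum, hcent, hp.2]
      ring
  _ ≤ Real.exp ((13/18) * l^2 * (∑ i, p i * (f i)^2)) := by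
      have := Real.add_one_le_exp ((13/18) * l^2 * (∑ i, p i * (f i)^2))
      linarith

lemma onesided (n : ℕ) (hn : 96 ≤ n) (hp : p ∈ stdSimplex ℝ (Fin S))
    (f : Fin S → ℝ) {D ρ t : ℝ} (hD : 0 < D) (hρ0 : 0 < ρ) (hρ1 : ρ < 1)
    (hb : ∀ i, |f i| ≤ D) (hcent : ∑ i, p i * f i = 0)
    (hta : 2 * Real.sqrt (Real.log (n/ρ) * (∑ i, p i * (f i)^2) / n) ≤ t)
    (htb : 3 * D * Real.log (n/ρ) / n ≤ t) :
    trialsLaw p n {x | (n : ℝ) * t ≤ ∑ j, f (x j)} ≤ ENNReal.ofReal (ρ/2) := by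
  set V : ℝ := ∑ i, p i * (f i)^2 with hV
  set L : ℝ := Real.log (n/ρ) with hLdef
  have hn0 : (0:ℝ) < n := by positivity
  have hn96 : (96:ℝ) ≤ n := by exact_mod_cast hn
  have hnρ : (96:ℝ) < n / ρ := by
    rw [lt_div_iff₀ hρ0]
    nlinarith
  have hLpos : 0 < L := Real.log_pos (by linarith)
  have hexpL : Real.exp (-L) = ρ / n := by
    rw [Real.exp_neg, hLdef, Real.exp_log (by positivity)]
    field_simp
  have hVnn : 0 ≤ V := Finset.sum_nonneg fun i _ => mul_nonneg (hp.1 i) (sq_nonneg _)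
  have ht0 : 0 < t := lt_of_lt_of_le (by positivity) htb
  have key : ∀ l : ℝ, 0 ≤ l → l * D ≤ 1 →
      trialsLaw p n {x | (n : ℝ) * t ≤ ∑ j, f (x j)} ≤
        ENNReal.ofReal (Real.exp ((n:ℝ) * ((13/18) * l^2 * V - l * t))) := by
    intro l hl0 hl1
    refine le_trans (chernoff n hp f l t hl0) (ENNReal.ofReal_le_ofReal ?_)
    have hM0 : 0 ≤ ∫ i, Real.exp (l * f i) ∂(catMeasure p) := by
      rw [cat_integral hp]
      exact Finset.sum_nonneg fun i _ => mul_nonneg (hp.1 i) (Real.exp_pos _).le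
    have hM := mgf_bound hp f hD hb hcent hl0 hl1
    calc Real.exp (-(l*n*t)) * (∫ i, Real.exp (l * f i) ∂(catMeasure p))^n
        ≤ Real.exp (-(l*n*t)) * (Real.exp ((13/18)*l^2*V))^n :=
          mul_le_mul_of_nonneg_left (pow_le_pow_left₀ hM0 hM n) (Real.exp_pos _).le
      _ = Real.exp ((n:ℝ) * ((13/18)*l^2*V - l*t)) := by
          rw [← Real.exp_nat_mul, ← Real.exp_add]
          ring_nf
  have hfin : ∀ E : ℝ, E ≤ -L → Real.exp E ≤ ρ / 2 := by
    intro E hE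
    calc Real.exp E ≤ Real.exp (-L) := Real.exp_le_exp.2 hE
    _ = ρ / n := hexpL
    _ ≤ ρ / 2 := by
        apply div_le_div_of_nonneg_left hρ0.le (by norm_num) (by linarith)
  by_cases hcase : t * D ≤ 2 * (13/18) * V
  · -- Case A
    have hVpos : 0 < V := by nlinarith
    set l : ℝ := t / (2 * (13/18) * V) with hl
    have hl0 : 0 ≤ l := by positivity
    have hl1 : l * D ≤ 1 := by
      rw [hl, div_mul_eq_mul_div, div_le_one (by positivity)]
      exact hcase
    refine le_trans (key l hl0 hl1) (ENNReal.ofReal_le_ofReal (hfin _ ?_))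
    have ht2 : 4 * (L * V / (n:ℝ)) ≤ t^2 := by
      have hs := Real.sq_sqrt (by positivity : (0:ℝ) ≤ L * V / n)
      nlinarith [Real.sqrt_nonneg (L * V / (n:ℝ))]
    have hexpr : (n:ℝ) * ((13/18) * l^2 * V - l * t) = -(9/26) * ((n:ℝ) * t^2 / V) := by
      rw [hl]
      field_simp
      ring
    rw [hexpr]
    have h1 : 4 * L ≤ (n:ℝ) * t^2 / V := by
      rw [le_div_iff₀ hVpos]
      calc 4 * L * V = (n:ℝ) * (4 * (L * V / n)) := by field_simp
      _ ≤ (n:ℝ) * t^2 := by nlinarith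
    nlinarith
  · -- Case B
    push_neg at hcase
    have hl0 : (0:ℝ) ≤ 1/D := by positivity
    have hl1 : (1/D) * D ≤ 1 := by
      rw [one_div, inv_mul_cancel₀ hD.ne']
    refine le_trans (key (1/D) hl0 hl1) (ENNReal.ofReal_le_ofReal (hfin _ ?_))
    have k1 : (2*(13/18)*V) * (1/D)^2 < (t*D) * (1/D)^2 :=
      mul_lt_mul_of_pos_right hcase (by positivity)
    have k3 : (t*D)*(1/D)^2 = t*(1/D) := by field_simp
    have e1 : (13/18) * (1/D)^2 * V - (1/D) * t ≤ -((1/D)*t/2) := by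
      rw [k3] at k1
      linarith
    have e2 : 3*L/(2*(n:ℝ)) ≤ (1/D)*t/2 := by
      have := mul_le_mul_of_nonneg_right htb (by positivity : (0:ℝ) ≤ (1/D)/2)
      calc 3*L/(2*(n:ℝ)) = (3*D*L/(n:ℝ)) * ((1/D)/2) := by field_simp
      _ ≤ t * ((1/D)/2) := this
      _ = (1/D)*t/2 := by ring
    have e3 : (n:ℝ) * ((13/18) * (1/D)^2 * V - (1/D) * t) ≤ (n:ℝ) * (-(3*L/(2*(n:ℝ)))) :=
      by have : (13/18) * (1/D)^2 * V - (1/D) * t ≤ -(3*L/(2*(n:ℝ))) := by linarith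
         exact mul_le_mul_of_nonneg_left this hn0.le
    have e4 : (n:ℝ) * (-(3*L/(2*(n:ℝ)))) = -(3*L/2) := by field_simp
    rw [e4] at e3
    linarith

lemma fin_tail_sum (g : Fin S → ℝ) (k : ℕ) :
    ∑ j ∈ univ.filter (fun j : Fin S => k ≤ (j:ℕ)), g j
      = ∑ j ∈ Finset.Ico k S, (if hj : j < S then g ⟨j, hj⟩ else 0) := by
  refine Finset.sum_bij' (fun i _ => (i : ℕ)) (fun j hj => ⟨j, (Finset.mem_Ico.1 hj).2⟩) ?_ ?_ ?_ ?_ ?_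
  · intro i hi; simp only [mem_filter, mem_univ, true_and] at hi
    exact Finset.mem_Ico.2 ⟨hi, i.2⟩
  · intro j hj; simp only [mem_filter, mem_univ, true_and]
    exact (Finset.mem_Ico.1 hj).1
  · intro i _; simp
  · intro j hj; simp
  · intro i _; simp

lemma Ioi_filter (i : Fin S) :
    Finset.Ioi i = univ.filter (fun j : Fin S => (i:ℕ)+1 ≤ (j:ℕ)) := by
  ext j
  simp only [Finset.mem_Ioi, Finset.mem_filter, Finset.mem_univ, true_and, Fin.lt_def]
  omega

lemma Ici_filter (i : Fin S) :
    Finset.Ici i = univ.filter (fun j : Fin S => (i:ℕ) ≤ (j:ℕ)) := by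
  ext j
  simp only [Finset.mem_Ici, Finset.mem_filter, Finset.mem_univ, true_and, Fin.le_def]

lemma var_identity (hS : 1 ≤ S) (p h : Fin S → ℝ) (hp : p ∈ stdSimplex ℝ (Fin S))
    (htail : ∀ i : Fin S, (i : ℕ) < S - 1 → 0 < ∑ j ∈ Finset.Ioi i, p j) :
    (∑ i ∈ univ.filter (fun i : Fin S => (i:ℕ) < S-1),
        (p i * (∑ j ∈ Finset.Ioi i, p j) / (∑ j ∈ Finset.Ici i, p j)) *
          (h i - (∑ j ∈ Finset.Ioi i, h j * p j) / (∑ j ∈ Finset.Ioi i, p j)) ^ 2)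
      = ∑ i, p i * (h i - ∑ j, p j * h j)^2 := by
  classical
  set pn : ℕ → ℝ := fun k => if hk : k < S then p ⟨k, hk⟩ else 0 with hpn
  set hn : ℕ → ℝ := fun k => if hk : k < S then h ⟨k, hk⟩ else 0 with hhn
  set T : ℕ → ℝ := fun k => ∑ j ∈ Finset.Ico k S, pn j with hT
  set B : ℕ → ℝ := fun k => ∑ j ∈ Finset.Ico k S, hn j * pn j with hB
  have hlink : ∀ k, ∑ j ∈ univ.filter (fun j : Fin S => k ≤ (j:ℕ)), p j = T k := by
    intro k; rw [hT, fin_tail_sum p k]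
  have hlinkB : ∀ k, ∑ j ∈ univ.filter (fun j : Fin S => k ≤ (j:ℕ)), h j * p j = B k := by
    intro k
    rw [fin_tail_sum (fun j => h j * p j) k]
    refine Finset.sum_congr rfl fun j hj => ?_
    have : j < S := (Finset.mem_Ico.1 hj).2
    simp [hpn, hhn, this]
  have hT0 : T 0 = 1 := by
    rw [← hlink 0, ← hp.2]
    apply Finset.sum_congr _ (fun _ _ => rfl)
    simp
  have hB0 : B 0 = ∑ j, p j * h j := by
    rw [← hlinkB 0]
    rw [show (univ.filter fun j : Fin S => 0 ≤ (j:ℕ)) = univ by simp]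
    exact Finset.sum_congr rfl fun j _ => mul_comm _ _
  have hTsplit : ∀ k, k < S → T k = pn k + T (k+1) := by
    intro k hk
    rw [hT]
    exact Finset.sum_eq_sum_Ico_succ_bot hk _
  have hBsplit : ∀ k, k < S → B k = hn k * pn k + B (k+1) := by
    intro k hk
    exact Finset.sum_eq_sum_Ico_succ_bot hk _
  have hTpos : ∀ k, k ≤ S - 1 → 0 < T k := by
    intro k hk
    rcases Nat.eq_zero_or_pos k with rfl | hk0
    · rw [hT0]; norm_num
    · have hi : k - 1 < S - 1 := by omega
      have := htail ⟨k-1, by omega⟩ (by simpa using hi)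
      rw [Ioi_filter, hlink] at this
      have : 0 < T ((k-1)+1) := this
      simpa [Nat.sub_add_cancel hk0] using this
  have hTlast : T (S-1) = pn (S-1) := by
    rw [hT]
    have : Finset.Ico (S-1) S = {S-1} := by
      ext j; simp [Finset.mem_Ico]; omega
    simp [this]
  have hBlast : B (S-1) = hn (S-1) * pn (S-1) := by
    rw [hB]
    have : Finset.Ico (S-1) S = {S-1} := by
      ext j; simp [Finset.mem_Ico]; omega
    simp [this]
  set G : ℕ → ℝ := fun k => (B k)^2 / T k with hG
  -- per-step identity
  have hstep : ∀ k, k < S - 1 →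
      pn k * T (k+1) / T k * (hn k - B (k+1) / T (k+1))^2
        = pn k * (hn k)^2 - (G k - G (k+1)) := by
    intro k hk
    have h1 : 0 < T (k+1) := hTpos (k+1) (by omega)
    have h2 : 0 < T k := hTpos k (by omega)
    have h3 : T k = pn k + T (k+1) := hTsplit k (by omega)
    have h4 : B k = hn k * pn k + B (k+1) := hBsplit k (by omega)
    simp only [hG]
    rw [h3] at h2 ⊢
    rw [h4]
    field_simp
    ring
  -- rewrite LHS as sum over range (S-1)
  have hmain : (∑ i ∈ univ.filter (fun i : Fin S => (i:ℕ) < S-1),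
        (p i * (∑ j ∈ Finset.Ioi i, p j) / (∑ j ∈ Finset.Ici i, p j)) *
          (h i - (∑ j ∈ Finset.Ioi i, h j * p j) / (∑ j ∈ Finset.Ioi i, p j)) ^ 2)
      = ∑ k ∈ Finset.range (S-1),
          pn k * T (k+1) / T k * (hn k - B (k+1) / T (k+1))^2 := by
    refine Finset.sum_bij' (fun i _ => (i : ℕ)) (fun k hk => ⟨k, by
      have := Finset.mem_range.1 hk; omega⟩) ?_ ?_ ?_ ?_ ?_
    · intro i hi; simp only [mem_filter, mem_univ, true_and] at hi
      exact Finset.mem_range.2 hi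
    · intro k hk; simp only [mem_filter, mem_univ, true_and]
      simpa using Finset.mem_range.1 hk
    · intro i _; simp
    · intro k hk; simp
    · intro i hi
      simp only [mem_filter, mem_univ, true_and] at hi
      rw [Ioi_filter, Ici_filter, hlink, hlink, hlinkB]
      have hpv : p i = pn (i:ℕ) := by simp [hpn, i.2]
      have hhv : h i = hn (i:ℕ) := by simp [hhn, i.2]
      rw [hpv, hhv]
  rw [hmain]
  have htel : ∑ k ∈ Finset.range (S-1), (G k - G (k+1)) = G 0 - G (S-1) :=
    Finset.sum_range_sub' G (S-1)
  calc ∑ k ∈ Finset.range (S-1), pn k * T (k+1) / T k * (hn k - B (k+1) / T (k+1))^2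
      = ∑ k ∈ Finset.range (S-1), (pn k * (hn k)^2 - (G k - G (k+1))) :=
        Finset.sum_congr rfl fun k hk => hstep k (Finset.mem_range.1 hk)
    _ = (∑ k ∈ Finset.range (S-1), pn k * (hn k)^2) - (G 0 - G (S-1)) := by
        rw [Finset.sum_sub_distrib, htel]
    _ = ∑ i, p i * (h i - ∑ j, p j * h j)^2 := by
        have hGlast : G (S-1) = pn (S-1) * (hn (S-1))^2 := by
          have hTl : 0 < T (S-1) := hTpos (S-1) le_rfl
          simp only [hG]
          rw [hBlast, hTlast]
          rw [hTlast] at hTl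
          field_simp
        have hG0 : G 0 = (∑ j, p j * h j)^2 := by
          simp only [hG]
          rw [hT0, hB0]; simp
        rw [hGlast, hG0]
        have hfull : ∑ k ∈ Finset.range S, pn k * (hn k)^2 = ∑ i, p i * (h i)^2 := by
          rw [← Fin.sum_univ_eq_sum_range (fun k => pn k * (hn k)^2) S]
          refine Finset.sum_congr rfl fun i _ => ?_
          simp [hpn, hhn, i.2]
        have hsplit : ∑ k ∈ Finset.range S, pn k * (hn k)^2
            = (∑ k ∈ Finset.range (S-1), pn k * (hn k)^2) + pn (S-1) * (hn (S-1))^2 := by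
          have : S = (S-1) + 1 := by omega
          rw [this, Finset.sum_range_succ]
          congr 1 <;> simp [← this]
        have hexp : ∑ i, p i * (h i - ∑ j, p j * h j)^2
            = (∑ i, p i * (h i)^2) - (∑ j, p j * h j)^2 := by
          have e1 : ∀ i : Fin S, p i * (h i - ∑ j, p j * h j)^2
              = p i * (h i)^2 - 2 * (∑ j, p j * h j) * (p i * h i)
                + (∑ j, p j * h j)^2 * p i := fun i => by ring
          simp only [e1, Finset.sum_add_distrib, Finset.sum_sub_distrib,
            ← Finset.mul_sum, hp.2]
          ring
        rw [hexp, ← hfull, hsplit]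
        ring

lemma emp_sum {S n : ℕ} (hn : 0 < n) (x : Fin n → Fin S) (g : Fin S → ℝ) :
    ∑ i, empDist x i * g i = (∑ j, g (x j)) / n := by
  have key : ∑ i : Fin S, ((Finset.univ.filter fun j => x j = i).card : ℝ) * g i
      = ∑ j, g (x j) := by
    rw [← Finset.sum_fiberwise_of_maps_to (fun j _ => Finset.mem_univ (x j)) (fun j => g (x j))]
    refine Finset.sum_congr rfl fun i _ => ?_
    have e1 : ∑ j ∈ Finset.univ.filter fun j => x j = i, g (x j)
        = ∑ j ∈ Finset.univ.filter fun j => x j = i, g i :=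
      Finset.sum_congr rfl fun j hj => by rw [(Finset.mem_filter.1 hj).2]
    rw [e1, Finset.sum_const, nsmul_eq_mul]
  rw [← key, Finset.sum_div]
  refine Finset.sum_congr rfl fun i _ => ?_
  rw [empDist, div_mul_eq_mul_div]


/-- Concentration of the empirical distribution against a fixed test vector `h ∈ [0,D]^S`
(Lemma `ConcentrationFixedh` of the paper). -/
theorem stmt_10 (S n : ℕ) (hS : 1 ≤ S) (hn : 96 ≤ n) (D ρ : ℝ) (hD : 0 < D)
    (hρ : ρ ∈ Set.Ioo (0 : ℝ) 1)
    (p : Fin S → ℝ) (hp : p ∈ stdSimplex ℝ (Fin S))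
    (htail : ∀ i : Fin S, (i : ℕ) < S - 1 → 0 < ∑ j ∈ Finset.Ioi i, p j)
    (h : Fin S → ℝ) (hh : ∀ i, h i ∈ Set.Icc (0 : ℝ) D) :
    ENNReal.ofReal (1 - ρ) ≤
      trialsLaw p n
        {x | |∑ i, (empDist x i - p i) * h i|
            ≤ 2 * Real.sqrt (Real.log (n / ρ) *
                (∑ i ∈ Finset.univ.filter (fun i : Fin S => (i : ℕ) < S - 1),
                  (p i * (∑ j ∈ Finset.Ioi i, p j) / (∑ j ∈ Finset.Ici i, p j)) *
                    (h i - (∑ j ∈ Finset.Ioi i, h j * p j) /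
                      (∑ j ∈ Finset.Ioi i, p j)) ^ 2) / n)
              + 3 * D * Real.log (n / ρ) / n} := by
  obtain ⟨hρ0, hρ1⟩ := hρ
  have hprob := trials_prob (p := p) n hp
  have hn0 : (0:ℝ) < n := by
    have : (96:ℝ) ≤ n := by exact_mod_cast hn
    linarith
  set μh : ℝ := ∑ j, p j * h j with hμh
  set f : Fin S → ℝ := fun i => h i - μh with hf
  have hμ0 : 0 ≤ μh := Finset.sum_nonneg fun j _ => mul_nonneg (hp.1 j) (hh j).1
  have hμD : μh ≤ D := by
    calc μh ≤ ∑ j, p j * D :=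
      Finset.sum_le_sum fun j _ => mul_le_mul_of_nonneg_left (hh j).2 (hp.1 j)
    _ = D := by rw [← Finset.sum_mul, hp.2, one_mul]
  have hb : ∀ i, |f i| ≤ D := by
    intro i
    have h1 := (hh i).1
    have h2 := (hh i).2
    rw [hf, abs_le]
    constructor <;> simp only <;> linarith
  have hcent : ∑ i, p i * f i = 0 := by
    simp only [hf, mul_sub]
    rw [Finset.sum_sub_distrib, ← Finset.sum_mul, hp.2, one_mul, ← hμh, sub_self]
  set V : ℝ := ∑ i, p i * (f i)^2 with hV
  have hid : (∑ i ∈ Finset.univ.filter (fun i : Fin S => (i : ℕ) < S - 1),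
      (p i * (∑ j ∈ Finset.Ioi i, p j) / (∑ j ∈ Finset.Ici i, p j)) *
        (h i - (∑ j ∈ Finset.Ioi i, h j * p j) / (∑ j ∈ Finset.Ioi i, p j)) ^ 2) = V := by
    rw [var_identity hS p h hp htail]
  set L : ℝ := Real.log ((n:ℝ) / ρ) with hL
  have hn96 : (96:ℝ) ≤ n := by exact_mod_cast hn
  have hL0 : 0 ≤ L := by
    apply Real.log_nonneg
    rw [le_div_iff₀ hρ0, one_mul]
    linarith
  set t : ℝ := 2 * Real.sqrt (L * V / n) + 3 * D * L / n with ht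
  have hVnn : 0 ≤ V := Finset.sum_nonneg fun i _ => mul_nonneg (hp.1 i) (sq_nonneg _)
  have hta : 2 * Real.sqrt (L * V / n) ≤ t := by
    rw [ht]
    have : 0 ≤ 3 * D * L / n := by positivity
    linarith
  have htb : 3 * D * L / n ≤ t := by
    rw [ht]
    have : 0 ≤ 2 * Real.sqrt (L * V / n) := by positivity
    linarith
  -- the two one-sided bounds
  have hB1 : trialsLaw p n {x | (n : ℝ) * t ≤ ∑ j, f (x j)} ≤ ENNReal.ofReal (ρ/2) :=
    onesided n hn hp f hD hρ0 hρ1 hb hcent hta htb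
  have hB2 : trialsLaw p n {x | (n : ℝ) * t ≤ ∑ j, (fun i => -(f i)) (x j)} ≤
      ENNReal.ofReal (ρ/2) := by
    apply onesided n hn hp (fun i => -(f i)) hD hρ0 hρ1
    · intro i; rw [abs_neg]; exact hb i
    · have e2 : ∀ i : Fin S, p i * (-(f i)) = -(p i * f i) := fun i => by ring
      simp only [e2, Finset.sum_neg_distrib, hcent, neg_zero]
    · have e3 : ∀ i : Fin S, p i * (-(f i))^2 = p i * (f i)^2 := fun i => by ring
      simp only [e3]
      exact hta
    · exact htb
  -- identify the event
  set E : Set (Fin n → Fin S) :=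
    {x | |∑ i, (empDist x i - p i) * h i|
        ≤ 2 * Real.sqrt (Real.log ((n:ℝ) / ρ) *
            (∑ i ∈ Finset.univ.filter (fun i : Fin S => (i : ℕ) < S - 1),
              (p i * (∑ j ∈ Finset.Ioi i, p j) / (∑ j ∈ Finset.Ici i, p j)) *
                (h i - (∑ j ∈ Finset.Ioi i, h j * p j) /
                  (∑ j ∈ Finset.Ioi i, p j)) ^ 2) / n)
          + 3 * D * Real.log ((n:ℝ) / ρ) / n} with hE
  have hZ : ∀ x : Fin n → Fin S, ∑ i, (empDist x i - p i) * h i = (∑ j, f (x j)) / n := by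
    intro x
    have e1 : ∑ i, (empDist x i - p i) * h i
        = (∑ i, empDist x i * h i) - ∑ i, p i * h i := by
      rw [← Finset.sum_sub_distrib]
      exact Finset.sum_congr rfl fun i _ => by ring
    rw [e1, emp_sum (by omega : 0 < n) x h]
    have e2 : ∑ j : Fin n, f (x j) = (∑ j : Fin n, h (x j)) - n * μh := by
      simp only [hf, Finset.sum_sub_distrib, Finset.sum_const, Finset.card_univ,
        Fintype.card_fin, nsmul_eq_mul]
    rw [e2, ← hμh, sub_div]
    congr 1
    field_simp
  have hEcompl : Eᶜ ⊆ {x | (n : ℝ) * t ≤ ∑ j, f (x j)} ∪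
      {x | (n : ℝ) * t ≤ ∑ j, (fun i => -(f i)) (x j)} := by
    intro x hx
    simp only [hE, Set.mem_compl_iff, Set.mem_setOf_eq, not_le, hid] at hx
    rw [hZ x] at hx
    have hxt : t < |(∑ j, f (x j)) / n| := hx
    rcases abs_cases ((∑ j, f (x j)) / n) with ⟨he, _⟩ | ⟨he, _⟩
    · left
      rw [he] at hxt
      rw [Set.mem_setOf_eq, mul_comm]
      rw [lt_div_iff₀ hn0] at hxt
      exact hxt.le
    · right
      rw [he] at hxt
      rw [Set.mem_setOf_eq, mul_comm]
      simp only [Finset.sum_neg_distrib]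
      rw [← neg_div] at hxt
      rw [lt_div_iff₀ hn0] at hxt
      exact hxt.le
  have hcompl : trialsLaw p n Eᶜ ≤ ENNReal.ofReal ρ := by
    refine le_trans (measure_mono hEcompl) (le_trans (measure_union_le _ _) ?_)
    refine le_trans (add_le_add hB1 hB2) ?_
    rw [← ENNReal.ofReal_add (by positivity) (by positivity)]
    apply ENNReal.ofReal_le_ofReal
    linarith
  have hEmeas : MeasurableSet E := (Set.toFinite E).measurableSet
  have hkey : trialsLaw p n E = 1 - trialsLaw p n Eᶜ := by
    rw [← compl_compl E] 
    rw [measure_compl hEmeas.compl (measure_ne_top _ _)]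
    rw [measure_univ, compl_compl]
  have hgoal : ENNReal.ofReal (1 - ρ) ≤ trialsLaw p n E := by
    rw [hkey]
    calc ENNReal.ofReal (1 - ρ) = ENNReal.ofReal 1 - ENNReal.ofReal ρ :=
        ENNReal.ofReal_sub 1 hρ0.le
    _ = 1 - ENNReal.ofReal ρ := by rw [ENNReal.ofReal_one]
    _ ≤ 1 - trialsLaw p n Eᶜ := tsub_le_tsub_left hcompl 1
  exact hgoal
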